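/- Let f = (f_0, f_1, …) and β = (β_0, β_1, …) be eventually-zero sequences of nonnegative integers such that χ_k + β_k ≥ 0 for all k ≥ 1, and let ε = (ε_1, ε_2, …) be a sequence of integers with 0 ≤ ε_k ≤ δ_k(f_k) for all k ≥ 1. Then ∂_k(χ_k + β_k) ≤ χ_{k−1} holds for all k ≥ 1 if and only if ∂_k(χ_k + β_k) ≤ χ_{k−1} − ε_k holds for all k ≥ 1. -/

import Mathlib

/-- Fold a function `g` over the terms `(a_t, t)` of the unique Macaulay-type
representation `n = C(a_{k+1}, k+1) + ⋯ + C(a_i, i)` with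
`a_{k+1} > ⋯ > a_i ≥ i ≥ 1`, computed greedily: at each level `t` (from `k+1`
down), `a_t` is the largest `a` with `C(a, t) ≤` the current remainder. -/
def macRepFold (g : ℕ → ℕ → ℕ) : ℕ → ℕ → ℕ
  | 0, _ => 0
  | t + 1, n =>
    if n = 0 then 0
    else
      let a := Nat.findGreatest (fun a => Nat.choose a (t + 1) ≤ n) (n + t + 1)
      g a (t + 1) + macRepFold g t (n - Nat.choose a (t + 1))

/-- The combinatorial shadow function `∂_k(n) = Σ_t C(a_t, t - 1)`. -/
def partialLower (k n : ℕ) : ℕ := macRepFold (fun a t => Nat.choose a (t - 1)) (k + 1) n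

/-- The combinatorial shadow function `∂^k(n) = Σ_t C(a_t - 1, t)`. -/
def partialUpper (k n : ℕ) : ℕ := macRepFold (fun a t => Nat.choose (a - 1) t) (k + 1) n

/-- The error function `δ_k(n) = #{t : a_t = t}`. -/
def deltaErr (k n : ℕ) : ℕ := macRepFold (fun a t => if a = t then 1 else 0) (k + 1) n

/-- The function `d^k(n) = Σ_t C(a_t + 1, t)`. -/
def dUpper (k n : ℕ) : ℕ := macRepFold (fun a t => Nat.choose (a + 1) t) (k + 1) n

def gA (t n : ℕ) : ℕ := Nat.findGreatest (fun a => Nat.choose a t ≤ n) (n + t)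

lemma macRepFold_zero (g : ℕ → ℕ → ℕ) (t : ℕ) : macRepFold g t 0 = 0 := by
  cases t <;> simp [macRepFold]

lemma macRepFold_succ (g : ℕ → ℕ → ℕ) (t n : ℕ) (hn : n ≠ 0) :
    macRepFold g (t+1) n =
      g (gA (t+1) n) (t+1) + macRepFold g t (n - Nat.choose (gA (t+1) n) (t+1)) := by
  rw [macRepFold, if_neg hn]
  rfl

lemma succ_sub_le_choose (t : ℕ) (ht : 1 ≤ t) : ∀ c, t ≤ c → c - t + 1 ≤ Nat.choose c t := by
  intro c
  induction c with
  | zero => intro h; omega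
  | succ c ih =>
    intro h
    rcases Nat.eq_or_lt_of_le h with h' | h'
    · subst h'; simp
    · obtain ⟨s, rfl⟩ : ∃ s, t = s + 1 := ⟨t - 1, by omega⟩
      have h1 : s + 1 ≤ c := by omega
      have h2 := ih h1
      have h3 : 1 ≤ Nat.choose c s := Nat.choose_pos (by omega)
      have h4 : Nat.choose (c+1) (s+1) = Nat.choose c s + Nat.choose c (s+1) :=
        Nat.choose_succ_succ c s
      omega

lemma gA_spec (t n : ℕ) (ht : 1 ≤ t) (hn : 1 ≤ n) :
    Nat.choose (gA t n) t ≤ n ∧ n < Nat.choose (gA t n + 1) t ∧ t ≤ gA t n := by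
  have hle : t ≤ gA t n := by
    apply Nat.le_findGreatest (by omega)
    simp
    omega
  have hlt : gA t n < n + t := by
    rcases Nat.lt_or_ge (gA t n) (n + t) with h | h
    · exact h
    · exfalso
      have h1 : gA t n ≤ n + t := Nat.findGreatest_le _
      have h2 : gA t n = n + t := le_antisymm h1 h
      have h3 : Nat.choose (n + t) t ≤ n := by
        have := Nat.findGreatest_of_ne_zero h2 (by omega)
        exact this
      have h4 : (n + t) - t + 1 ≤ Nat.choose (n + t) t := succ_sub_le_choose t ht _ (by omega)
      omega
  refine ⟨?_, ?_, hle⟩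
  · exact Nat.findGreatest_of_ne_zero (P := fun a => Nat.choose a t ≤ n) (m := gA t n) rfl (by omega)
  · have := Nat.findGreatest_is_greatest (P := fun a => Nat.choose a t ≤ n) (n := n + t)
      (k := gA t n + 1) (by exact Nat.lt_succ_self _) (by omega)
    omega

lemma gA_eq (t n c : ℕ) (ht : 1 ≤ t) (htc : t ≤ c)
    (h1 : Nat.choose c t ≤ n) (h2 : n < Nat.choose (c+1) t) : gA t n = c := by
  have hn : 1 ≤ n := le_trans (Nat.choose_pos htc) h1
  obtain ⟨s1, s2, s3⟩ := gA_spec t n ht hn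
  have hcb : c ≤ n + t := by
    have := succ_sub_le_choose t ht c htc
    omega
  have hc : c ≤ gA t n := Nat.le_findGreatest hcb h1
  rcases Nat.eq_or_lt_of_le hc with h | h
  · omega
  · exfalso
    have : Nat.choose (c+1) t ≤ Nat.choose (gA t n) t := Nat.choose_le_choose t h
    omega

lemma gA_one (n : ℕ) (hn : 1 ≤ n) : gA 1 n = n := by
  apply gA_eq 1 n n le_rfl hn <;> simp

lemma dFold_eq_add (K : ℕ) : ∀ n,
    macRepFold (fun a t => Nat.choose (a + 1) t) (K + 1) n
      = n + macRepFold (fun a t => Nat.choose a (t - 1)) (K + 1) n := by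
  induction K with
  | zero =>
    intro n
    rcases Nat.eq_zero_or_pos n with rfl | hn
    · simp [macRepFold_zero]
    · rw [macRepFold_succ _ _ _ (by omega), macRepFold_succ _ _ _ (by omega), gA_one n hn]
      simp [macRepFold_zero]
  | succ K ih =>
    intro n
    rcases Nat.eq_zero_or_pos n with rfl | hn
    · simp [macRepFold_zero]
    · rw [macRepFold_succ (fun a t => Nat.choose (a + 1) t) (K + 1) n (by omega),
        macRepFold_succ (fun a t => Nat.choose a (t - 1)) (K + 1) n (by omega), ih]
      obtain ⟨h1, h2, h3⟩ := gA_spec (K + 1 + 1) n (by omega) hn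
      set a := gA (K + 1 + 1) n
      have h4 : Nat.choose (a + 1) (K + 1 + 1) = Nat.choose a (K + 1) + Nat.choose a (K + 1 + 1) :=
        Nat.choose_succ_succ a (K + 1)
      have h5 : Nat.choose a (K + 1 + 1 - 1) = Nat.choose a (K + 1) := by norm_num
      omega

lemma eFold_le (K : ℕ) : ∀ n, macRepFold (fun a t => if a = t then 1 else 0) K n ≤ n := by
  induction K with
  | zero => intro n; simp [macRepFold_zero, macRepFold]
  | succ K ih =>
    intro n
    rcases Nat.eq_zero_or_pos n with rfl | hn
    · simp [macRepFold_zero]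
    · rw [macRepFold_succ _ _ _ (by omega)]
      obtain ⟨h1, h2, h3⟩ := gA_spec (K + 1) n (by omega) hn
      set a := gA (K + 1) n
      have h4 := ih (n - Nat.choose a (K + 1))
      have h5 : 1 ≤ Nat.choose a (K + 1) := Nat.choose_pos h3
      have h6 : (if a = K + 1 then 1 else 0) ≤ 1 := by split <;> omega
      omega

lemma dFold_lt : ∀ t m b, m < Nat.choose b t →
    macRepFold (fun a t => Nat.choose (a + 1) t) t m < Nat.choose (b + 1) t := by
  intro t
  induction t with
  | zero => intro m b h; simp [macRepFold]
  | succ t ih =>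
    intro m b h
    have hb : t + 1 ≤ b := by
      by_contra hc
      rw [Nat.choose_eq_zero_of_lt (by omega)] at h
      omega
    rcases Nat.eq_zero_or_pos m with rfl | hm
    · rw [macRepFold_zero]
      exact Nat.choose_pos (by omega)
    · rw [macRepFold_succ _ _ _ (by omega)]
      obtain ⟨h1, h2, h3⟩ := gA_spec (t + 1) m (by omega) hm
      set a := gA (t + 1) m
      have hab : a < b := by
        by_contra hc
        have := Nat.choose_le_choose (t + 1) (show b ≤ a by omega)
        omega
      have h4 : Nat.choose (a + 1) (t + 1) = Nat.choose a t + Nat.choose a (t + 1) :=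
        Nat.choose_succ_succ a t
      have h5 : m - Nat.choose a (t + 1) < Nat.choose a t := by omega
      have h6 := ih (m - Nat.choose a (t + 1)) a h5
      have h7 : Nat.choose (a + 2) (t + 1) = Nat.choose (a+1) t + Nat.choose (a+1) (t + 1) :=
        Nat.choose_succ_succ (a+1) t
      have h8 : Nat.choose (a + 2) (t + 1) ≤ Nat.choose (b + 1) (t + 1) :=
        Nat.choose_le_choose (t + 1) (by omega)
      omega

lemma eFold_dFold (K : ℕ) : ∀ n,
    macRepFold (fun a t => if a = t then 1 else 0) K
      (macRepFold (fun a t => Nat.choose (a + 1) t) K n) = 0 := by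
  induction K with
  | zero => intro n; simp [macRepFold]
  | succ K ih =>
    intro n
    rcases Nat.eq_zero_or_pos n with rfl | hn
    · simp [macRepFold_zero]
    · rw [macRepFold_succ (fun a t => Nat.choose (a + 1) t) K n (by omega)]
      obtain ⟨h1, h2, h3⟩ := gA_spec (K + 1) n (by omega) hn
      set a := gA (K + 1) n with ha
      set r := n - Nat.choose a (K + 1) with hr
      set w := macRepFold (fun a t => Nat.choose (a + 1) t) K r with hw
      have hr2 : r < Nat.choose a K := by
        have h4 : Nat.choose (a + 1) (K + 1) = Nat.choose a K + Nat.choose a (K + 1) :=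
          Nat.choose_succ_succ a K
        omega
      have hw2 : w < Nat.choose (a + 1) K := dFold_lt K r a hr2
      have hv1 : 1 ≤ Nat.choose (a + 1) (K + 1) := Nat.choose_pos (by omega)
      have hv2 : Nat.choose (a + 1) (K + 1) + w < Nat.choose (a + 1 + 1) (K + 1) := by
        have hx : Nat.choose (a + 1 + 1) (K + 1)
            = Nat.choose (a + 1) K + Nat.choose (a + 1) (K + 1) :=
          Nat.choose_succ_succ (a + 1) K
        omega
      have hga : gA (K + 1) (Nat.choose (a + 1) (K + 1) + w) = a + 1 :=
        gA_eq (K + 1) _ (a + 1) (by omega) (by omega) (by omega) hv2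
      rw [macRepFold_succ (fun a t => if a = t then 1 else 0) K _ (by omega), hga]
      have hne : (if a + 1 = K + 1 then 1 else 0) = 0 := by
        have : a + 1 ≠ K + 1 := by omega
        exact if_neg this
      rw [hne]
      have hsub : Nat.choose (a + 1) (K + 1) + w - Nat.choose (a + 1) (K + 1) = w := by omega
      rw [hsub, hw, hr]
      simpa using ih r

lemma main_ineq : ∀ K, ∀ fv v, macRepFold (fun a t => if a = t then 1 else 0) K v = 0 →
    v ≤ fv → v + macRepFold (fun a t => if a = t then 1 else 0) K fv ≤ fv := by
  intro K
  induction K with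
  | zero => intro fv v _ h2; simp [macRepFold]; omega
  | succ K ih =>
    intro fv v hv hle
    rcases Nat.eq_zero_or_pos v with rfl | hvp
    · have := eFold_le (K + 1) fv
      omega
    · have hfp : 1 ≤ fv := le_trans hvp hle
      obtain ⟨a1, a2, a3⟩ := gA_spec (K + 1) v (by omega) hvp
      obtain ⟨b1, b2, b3⟩ := gA_spec (K + 1) fv (by omega) hfp
      set A' := gA (K + 1) v with hA'
      set A := gA (K + 1) fv with hA
      rw [macRepFold_succ (fun a t => if a = t then 1 else 0) K v (by omega)] at hv
      rw [macRepFold_succ (fun a t => if a = t then 1 else 0) K fv (by omega)]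
      rw [← hA'] at hv
      rw [← hA]
      have hA'ne : A' ≠ K + 1 := by
        intro h
        rw [h] at hv
        simp at hv
      have hvrec : macRepFold (fun a t => if a = t then 1 else 0) K
          (v - Nat.choose A' (K + 1)) = 0 := by
        rcases Nat.eq_or_lt_of_le a3 with h | h
        · omega
        · simpa [show A' ≠ K + 1 from hA'ne] using hv
      have hA'A : A' ≤ A := by
        by_contra hc
        have := Nat.choose_le_choose (K + 1) (show A + 1 ≤ A' by omega)
        omega
      rcases Nat.eq_or_lt_of_le hA'A with heq | hlt
      · -- A' = A
        rw [if_neg (show A ≠ K + 1 from heq ▸ hA'ne)]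
        have hrec := ih (fv - Nat.choose A (K + 1)) (v - Nat.choose A' (K + 1)) hvrec
          (by rw [heq]; omega)
        rw [heq] at a1
        rw [heq] at hrec
        omega
      · -- A' < A
        rw [if_neg (show A ≠ K + 1 by omega)]
        have h1 : v < Nat.choose A (K + 1) :=
          lt_of_lt_of_le a2 (Nat.choose_le_choose (K + 1) hlt)
        have h2 := eFold_le K (fv - Nat.choose A (K + 1))
        omega

lemma chi_step (f β : ℕ → ℕ) (Nf Nb : ℕ) (hNf : ∀ j, Nf ≤ j → f j = 0)
    (hNb : ∀ j, Nb ≤ j → β j = 0) (χ : ℕ → ℤ)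
    (hχ : ∀ k, χ k = ∑ᶠ j : ℕ,
      if k ≤ j then (-1 : ℤ) ^ (j - k) * ((f j : ℤ) - (β j : ℤ)) else 0)
    (k : ℕ) : χ k + χ (k + 1) = (f k : ℤ) - (β k : ℤ) := by
  set M := max Nf Nb + k + 2 with hM
  have hkM : k ∈ Finset.range M := by simp [hM]; omega
  have hsum : ∀ k', χ k' = ∑ j ∈ Finset.range M,
      (if k' ≤ j then (-1 : ℤ) ^ (j - k') * ((f j : ℤ) - (β j : ℤ)) else 0) := by
    intro k'
    rw [hχ k']
    apply finsum_eq_sum_of_support_subset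
    intro j hj
    simp only [Function.mem_support] at hj
    simp only [Finset.coe_range, Set.mem_Iio]
    by_contra hc
    have hjM : M ≤ j := by omega
    have h1 : f j = 0 := hNf j (by omega)
    have h2 : β j = 0 := hNb j (by omega)
    apply hj
    rw [h1, h2]
    simp
  rw [hsum k, hsum (k + 1), ← Finset.sum_add_distrib]
  have hpt : ∀ j ∈ Finset.range M,
      ((if k ≤ j then (-1 : ℤ) ^ (j - k) * ((f j : ℤ) - (β j : ℤ)) else 0) +
       (if k + 1 ≤ j then (-1 : ℤ) ^ (j - (k + 1)) * ((f j : ℤ) - (β j : ℤ)) else 0))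
      = if j = k then ((f j : ℤ) - (β j : ℤ)) else 0 := by
    intro j _
    rcases lt_trichotomy j k with h | h | h
    · rw [if_neg (by omega), if_neg (by omega), if_neg (by omega)]
      ring
    · subst h
      rw [if_pos le_rfl, if_neg (by omega), if_pos rfl]
      simp
    · rw [if_pos (by omega), if_pos (by omega), if_neg (by omega)]
      have hd : j - k = (j - (k + 1)) + 1 := by omega
      rw [hd, pow_succ]
      ring
  rw [Finset.sum_congr rfl hpt, Finset.sum_ite_eq' (Finset.range M) k
    (fun j => ((f j : ℤ) - (β j : ℤ))), if_pos hkM]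

/-- Corollary 1.5, (b) ⟺ (b*): for eventually-zero sequences `f, β` of nonnegative
integers with `χ_k + β_k ≥ 0` for all `k ≥ 1`, and any integer sequence `ε` with
`0 ≤ ε_k ≤ δ_k(f_k)`: `∂_k(χ_k + β_k) ≤ χ_{k−1}` for all `k ≥ 1` iff
`∂_k(χ_k + β_k) ≤ χ_{k−1} − ε_k` for all `k ≥ 1`.
Here `χ k` denotes `χ_{k−1} = Σ_{j ≥ k} (−1)^{j−k}(f_j − β_j)`,
so `χ_k + β_k = χ (k+1) + β k`. -/
theorem shadow_ineq_iff_shadow_ineq_sub_err (f β : ℕ → ℕ)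
    (hf : ∃ N, ∀ j, N ≤ j → f j = 0) (hβ : ∃ N, ∀ j, N ≤ j → β j = 0)
    (χ : ℕ → ℤ)
    (hχ : ∀ k, χ k = ∑ᶠ j : ℕ,
      if k ≤ j then (-1 : ℤ) ^ (j - k) * ((f j : ℤ) - (β j : ℤ)) else 0)
    (hpos : ∀ k, 1 ≤ k → 0 ≤ χ (k + 1) + (β k : ℤ))
    (ε : ℕ → ℤ) (hε0 : ∀ k, 1 ≤ k → 0 ≤ ε k)
    (hε : ∀ k, 1 ≤ k → ε k ≤ (deltaErr k (f k) : ℤ)) :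
    (∀ k, 1 ≤ k → (partialLower k (χ (k + 1) + (β k : ℤ)).toNat : ℤ) ≤ χ k) ↔
    (∀ k, 1 ≤ k → (partialLower k (χ (k + 1) + (β k : ℤ)).toNat : ℤ) ≤ χ k - ε k) := by
  obtain ⟨Nf, hNf⟩ := hf
  obtain ⟨Nb, hNb⟩ := hβ
  constructor
  · intro H k hk
    have hb := hpos k hk
    have hn : (((χ (k + 1) + (β k : ℤ)).toNat : ℤ)) = χ (k + 1) + (β k : ℤ) :=
      Int.toNat_of_nonneg hb
    set n := (χ (k + 1) + (β k : ℤ)).toNat with hndef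
    have hrec := chi_step f β Nf Nb hNf hNb χ hχ k
    have hχk : χ k = (f k : ℤ) - (n : ℤ) := by rw [hn]; linarith
    have H1 := H k hk
    have h2 : (n : ℤ) + (partialLower k n : ℤ) ≤ (f k : ℤ) := by linarith
    have h3 : n + partialLower k n ≤ f k := by exact_mod_cast h2
    have hd : dUpper k n = n + partialLower k n := dFold_eq_add k n
    have h5 : macRepFold (fun a t => if a = t then 1 else 0) (k + 1) (dUpper k n) = 0 :=
      eFold_dFold (k + 1) n
    have h6 : dUpper k n + deltaErr k (f k) ≤ f k :=
      main_ineq (k + 1) (f k) (dUpper k n) h5 (by omega)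
    have h8 : (dUpper k n : ℤ) + (deltaErr k (f k) : ℤ) ≤ (f k : ℤ) := by exact_mod_cast h6
    have h9 : (dUpper k n : ℤ) = (n : ℤ) + (partialLower k n : ℤ) := by exact_mod_cast hd
    have h10 := hε k hk
    linarith
  · intro H k hk
    have := hε0 k hk
    have := H k hk
    linarith
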